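/- Let (X, d) be a connected length metric space (or a connected Riemannian manifold) such that for some point p ∈ X the function x ↦ d(x, p) is proper (i.e. closed balls are compact), and suppose every point of the closed ball of radius R about p has a neighborhood B(a; 3r) contained in a simply connected open set for some fixed r > 0. Then for each R > 0, the set K(p, R) of homotopy classes in π₁(X, p) represented by piecewise smooth loops at p of length < R is finite. -/

import Mathlib

/-- The length of a path in a metric space, as its total variation. -/
noncomputable def pathLength {X : Type*} [MetricSpace X] {x y : X} (γ : Path x y) : ENNReal :=
  eVariationOn γ.extend (Set.Icc 0 1)

open Set Filter Metric Topology unitInterval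

section Helpers
variable {X : Type*} [TopologicalSpace X]

/-- Transfer `Path.Homotopic` across paths with equal underlying functions
(but possibly different (propositionally equal) endpoints). -/
theorem Path.Homotopic.of_coe_eq {x y x' y' : X} {p q : Path x y} {p' q' : Path x' y'}
    (hp : (p : I → X) = (p' : I → X)) (hq : (q : I → X) = (q' : I → X))
    (h : p.Homotopic q) : p'.Homotopic q' := by
  have hx : x = x' := by rw [← p.source, ← p'.source, hp]
  subst hx
  have hy : y = y' := by rw [← p.target, ← p'.target, hp]
  subst hy
  have h1 : p = p' := by ext t; exact congrFun hp t
  have h2 : q = q' := by ext t; exact congrFun hq t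
  rwa [h1, h2] at h

/-- Two paths whose ranges lie in a simply connected subset are homotopic. -/
theorem Path.Homotopic.of_range_subset {x y : X} {s : Set X} [SimplyConnectedSpace s]
    (p q : Path x y) (hp : range p ⊆ s) (hq : range q ⊆ s) : p.Homotopic q := by
  have hx : x ∈ s := by rw [← p.source]; exact hp (mem_range_self 0)
  have hy : y ∈ s := by rw [← p.target]; exact hp (mem_range_self 1)
  let P : Path (⟨x, hx⟩ : s) ⟨y, hy⟩ :=
    { toFun := fun t => ⟨p t, hp (mem_range_self t)⟩
      continuous_toFun := p.continuous.subtype_mk _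
      source' := Subtype.ext p.source
      target' := Subtype.ext p.target }
  let Q : Path (⟨x, hx⟩ : s) ⟨y, hy⟩ :=
    { toFun := fun t => ⟨q t, hq (mem_range_self t)⟩
      continuous_toFun := q.continuous.subtype_mk _
      source' := Subtype.ext q.source
      target' := Subtype.ext q.target }
  have h : P.Homotopic Q := SimplyConnectedSpace.paths_homotopic P Q
  have h2 := Path.Homotopic.map h ⟨Subtype.val, continuous_subtype_val⟩
  exact Path.Homotopic.of_coe_eq rfl rfl h2

/-- Two paths obtained by composing (the extension of) a path `γ` with continuous
maps `φ ψ : I → ℝ` agreeing at the endpoints are homotopic. -/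
theorem Path.Homotopic.of_extend_comp {x y a b : X} (γ : Path x y) {p q : Path a b}
    (φ ψ : I → ℝ) (hφ : Continuous φ) (hψ : Continuous ψ)
    (h0 : φ 0 = ψ 0) (h1 : φ 1 = ψ 1)
    (hp : ∀ t, p t = γ.extend (φ t)) (hq : ∀ t, q t = γ.extend (ψ t)) :
    p.Homotopic q := by
  refine ⟨{ toFun := fun st => γ.extend ((1 - (st.1 : ℝ)) * φ st.2 + (st.1 : ℝ) * ψ st.2)
            continuous_toFun := by
              apply γ.continuous_extend.comp
              fun_prop
            map_zero_left := ?_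
            map_one_left := ?_
            prop' := ?_ }⟩
  · intro t
    simp only [Icc.coe_zero]
    rw [show (1 - (0:ℝ)) * φ t + 0 * ψ t = φ t by ring]
    exact (hp t).symm
  · intro t
    simp only [Icc.coe_one]
    rw [show (1 - (1:ℝ)) * φ t + 1 * ψ t = ψ t by ring]
    exact (hq t).symm
  · intro t u hu
    rcases hu with hu | hu
    · subst hu
      show γ.extend _ = _
      rw [show (1 - (t : ℝ)) * φ 0 + (t : ℝ) * ψ 0 = φ 0 by rw [← h0]; ring]
      exact (hp 0).symm
    · simp only [mem_singleton_iff] at hu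
      subst hu
      show γ.extend _ = _
      rw [show (1 - (t : ℝ)) * φ 1 + (t : ℝ) * ψ 1 = φ 1 by rw [← h1]; ring]
      exact (hp 1).symm

end Helpers

section Trunc
variable {X : Type*} [TopologicalSpace X]

theorem Path.Homotopic.trans_truncate {x y : X} (γ : Path x y) {t₀ t₁ t₂ : ℝ}
    (ht0 : 0 ≤ t₀) (h01 : t₀ ≤ t₁) (h12 : t₁ ≤ t₂) (ht2 : t₂ ≤ 1) :
    ((γ.truncateOfLE h01).trans (γ.truncateOfLE h12)).Homotopic
      (γ.truncateOfLE (h01.trans h12)) := by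
  have ht1 : t₁ ≤ 1 := h12.trans ht2
  have h0t1 : 0 ≤ t₁ := ht0.trans h01
  refine Path.Homotopic.of_extend_comp γ
    (fun t => if (t : ℝ) ≤ 1/2 then min (max (2*(t:ℝ)) t₀) t₁ else min (max (2*(t:ℝ)-1) t₁) t₂)
    (fun t => min (max (t:ℝ) t₀) t₂) ?_ ?_ ?_ ?_ ?_ ?_
  · apply Continuous.if_le
    · fun_prop
    · fun_prop
    · exact continuous_subtype_val
    · exact continuous_const
    · intro t ht
      rw [ht]
      norm_num
      rw [max_eq_left (by linarith : t₀ ≤ 1), min_eq_right ht1, max_eq_right h0t1,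
        min_eq_left h12]
  · fun_prop
  · simp only [Icc.coe_zero, mul_zero]
    rw [if_pos (by norm_num : (0:ℝ) ≤ 1/2)]
    rw [max_eq_right ht0, min_eq_left h01]
    exact (min_eq_left (h01.trans h12)).symm
  · simp only [Icc.coe_one]
    rw [if_neg (by norm_num : ¬(1:ℝ) ≤ 1/2)]
    rw [show (2:ℝ)*1-1 = 1 by norm_num, max_eq_left ht1, min_eq_right ht2,
      max_eq_left (h01.trans ht1), min_eq_right ht2]
  · intro t
    rw [Path.trans_apply]
    split_ifs with h
    · rfl
    · rfl
  · intro t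
    rfl

end Trunc

section Subdiv
variable {X : Type*} [MetricSpace X]

theorem exists_subdivision {x y : X} (γ : Path x y) {δ : ℝ} (hδ : 0 < δ) {N : ℕ}
    (hN1 : 1 ≤ N) (hlen : pathLength γ ≤ ENNReal.ofReal (N * δ)) :
    ∃ s : ℕ → ℝ, s 0 = 0 ∧ (∀ k, s k ≤ s (k + 1)) ∧ (∀ k, s k ∈ Icc (0:ℝ) 1) ∧ s N = 1 ∧
      ∀ k, ∀ u ∈ Icc (s k) (s (k + 1)),
        edist (γ.extend (s k)) (γ.extend u) ≤ ENNReal.ofReal δ := by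
  set f := γ.extend with hf_def
  have hf : Continuous f := γ.continuous_extend
  set v : ℝ → ENNReal := fun u => eVariationOn f (Icc 0 u) with hv_def
  have hvmono : ∀ {a b : ℝ}, a ≤ b → v a ≤ v b := fun hab =>
    eVariationOn.mono f (Icc_subset_Icc_right hab)
  have hadd : ∀ {a b : ℝ}, 0 ≤ a → a ≤ b → v a + eVariationOn f (Icc a b) = v b := by
    intro a b h0a hab
    have := eVariationOn.Icc_add_Icc f (s := (univ : Set ℝ)) h0a hab (mem_univ a)
    simpa using this
  set A : ℕ → Set ℝ := fun k => {u | u ∈ Icc (0:ℝ) 1 ∧ v u ≤ ENNReal.ofReal (k * δ)}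
    with hA_def
  have hv0 : v 0 = 0 :=
    eVariationOn.subsingleton f (by rw [Icc_self]; exact subsingleton_singleton)
  have hA0 : ∀ k, (0:ℝ) ∈ A k := by
    intro k
    refine ⟨⟨le_refl _, zero_le_one⟩, ?_⟩
    rw [hv0]; exact zero_le
  have hAne : ∀ k, (A k).Nonempty := fun k => ⟨0, hA0 k⟩
  have hAbdd : ∀ k, BddAbove (A k) := fun k => ⟨1, fun u hu => hu.1.2⟩
  set t : ℕ → ℝ := fun k => sSup (A k) with ht_def
  have ht01 : ∀ k, t k ∈ Icc (0:ℝ) 1 := fun k =>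
    ⟨le_csSup (hAbdd k) (hA0 k), csSup_le (hAne k) fun u hu => hu.1.2⟩
  have htmono : ∀ k, t k ≤ t (k + 1) := by
    intro k
    apply csSup_le_csSup (hAbdd _) (hAne _)
    intro u hu
    refine ⟨hu.1, hu.2.trans (ENNReal.ofReal_le_ofReal ?_)⟩
    have : (k:ℝ) ≤ (k:ℝ) + 1 := by linarith
    push_cast
    nlinarith [hδ.le]
  have htN : t N = 1 := by
    refine le_antisymm (ht01 N).2 (le_csSup (hAbdd N) ⟨⟨zero_le_one, le_refl _⟩, ?_⟩)
    exact hlen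
  have hlt : ∀ k {u : ℝ}, u ∈ Icc (0:ℝ) 1 → t k < u → ENNReal.ofReal (k * δ) < v u := by
    intro k u hu htu
    by_contra hcon
    push_neg at hcon
    exact absurd (le_csSup (hAbdd k) ⟨hu, hcon⟩) (not_le.mpr htu)
  have hle : ∀ k {u : ℝ}, u < t k → v u ≤ ENNReal.ofReal (k * δ) := by
    intro k u hu
    obtain ⟨w, hw, huw⟩ := exists_lt_of_lt_csSup (hAne k) hu
    exact (hvmono huw.le).trans hw.2
  have hstar : ∀ k {a b : ℝ}, t k < a → a ≤ b → b ≤ 1 →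
      v b ≤ ENNReal.ofReal ((k + 1 : ℕ) * δ) → edist (f a) (f b) ≤ ENNReal.ofReal δ := by
    intro k a b hka hab hb1 hvb
    have h0a : 0 ≤ a := (ht01 k).1.trans hka.le
    have hva : ENNReal.ofReal (k * δ) ≤ v a :=
      (hlt k ⟨h0a, hab.trans hb1⟩ hka).le
    have hed : edist (f a) (f b) ≤ eVariationOn f (Icc a b) :=
      eVariationOn.edist_le f (left_mem_Icc.mpr hab) (right_mem_Icc.mpr hab)
    have key : ENNReal.ofReal (k * δ) + edist (f a) (f b) ≤
        ENNReal.ofReal (k * δ) + ENNReal.ofReal δ := by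
      calc ENNReal.ofReal (k * δ) + edist (f a) (f b) ≤ v a + eVariationOn f (Icc a b) :=
            add_le_add hva hed
        _ = v b := hadd h0a hab
        _ ≤ ENNReal.ofReal ((k + 1 : ℕ) * δ) := hvb
        _ = ENNReal.ofReal (k * δ) + ENNReal.ofReal δ := by
            rw [← ENNReal.ofReal_add (by positivity) hδ.le]
            congr 1
            push_cast
            ring
    exact (ENNReal.add_le_add_iff_left ENNReal.ofReal_ne_top).mp key
  have hS1 : ∀ k {u : ℝ}, t k ≤ u → u < t (k + 1) → edist (f (t k)) (f u) ≤ ENNReal.ofReal δ := by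
    intro k u hku hu
    rcases eq_or_lt_of_le hku with heq | hlt'
    · rw [← heq]
      simp
    · have hvu : v u ≤ ENNReal.ofReal ((k + 1 : ℕ) * δ) := hle (k + 1) hu
      have hu1 : u ≤ 1 := (hu.le).trans (ht01 (k + 1)).2
      have key : ∀ a ∈ Ioc (t k) u, edist (f a) (f u) ≤ ENNReal.ofReal δ := fun a ha =>
        hstar k ha.1 ha.2 hu1 hvu
      have hne : (𝓝[Ioc (t k) u] (t k)).NeBot := by
        apply mem_closure_iff_nhdsWithin_neBot.mp
        rw [closure_Ioc hlt'.ne]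
        exact left_mem_Icc.mpr hlt'.le
      have htend : Tendsto (fun a => edist (f a) (f u)) (𝓝[Ioc (t k) u] (t k))
          (𝓝 (edist (f (t k)) (f u))) := by
        apply Tendsto.edist
        · exact (hf.continuousAt.continuousWithinAt).tendsto
        · exact tendsto_const_nhds
      exact le_of_tendsto htend (eventually_nhdsWithin_of_forall key)
  have hS : ∀ k {u : ℝ}, t k ≤ u → u ≤ t (k + 1) → edist (f (t k)) (f u) ≤ ENNReal.ofReal δ := by
    intro k u hku hu
    rcases lt_or_eq_of_le hu with hlt' | heq
    · exact hS1 k hku hlt'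
    · rcases eq_or_lt_of_le hku with heq2 | hlt2
      · rw [← heq2]; simp
      · have key : ∀ b ∈ Ioo (t k) u, edist (f (t k)) (f b) ≤ ENNReal.ofReal δ := by
          intro b hb
          exact hS1 k hb.1.le (heq ▸ hb.2)
        have hne : (𝓝[Ioo (t k) u] u).NeBot := by
          apply mem_closure_iff_nhdsWithin_neBot.mp
          rw [closure_Ioo hlt2.ne]
          exact right_mem_Icc.mpr hlt2.le
        have htend : Tendsto (fun b => edist (f (t k)) (f b)) (𝓝[Ioo (t k) u] u)
            (𝓝 (edist (f (t k)) (f u))) := by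
          apply Tendsto.edist
          · exact tendsto_const_nhds
          · exact (hf.continuousAt.continuousWithinAt).tendsto
        exact le_of_tendsto htend (eventually_nhdsWithin_of_forall key)
  have hZ : f (t 0) = f 0 := by
    rcases eq_or_lt_of_le (ht01 0).1 with heq | hlt0
    · rw [← heq]
    · have key : ∀ b ∈ Ioo (0:ℝ) (t 0), edist (f 0) (f b) ≤ (0:ENNReal) := by
        intro b hb
        have hvb : v b ≤ ENNReal.ofReal ((0:ℕ) * δ) := hle 0 hb.2
        simp only [Nat.cast_zero, zero_mul, ENNReal.ofReal_zero] at hvb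
        have : edist (f 0) (f b) ≤ v b :=
          eVariationOn.edist_le f (left_mem_Icc.mpr hb.1.le) (right_mem_Icc.mpr hb.1.le)
        exact this.trans hvb
      have hne : (𝓝[Ioo (0:ℝ) (t 0)] (t 0)).NeBot := by
        apply mem_closure_iff_nhdsWithin_neBot.mp
        rw [closure_Ioo hlt0.ne]
        exact right_mem_Icc.mpr hlt0.le
      have htend : Tendsto (fun b => edist (f 0) (f b)) (𝓝[Ioo (0:ℝ) (t 0)] (t 0))
          (𝓝 (edist (f 0) (f (t 0)))) := by
        apply Tendsto.edist
        · exact tendsto_const_nhds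
        · exact (hf.continuousAt.continuousWithinAt).tendsto
      have : edist (f 0) (f (t 0)) ≤ 0 := le_of_tendsto htend (eventually_nhdsWithin_of_forall key)
      have h0 : edist (f 0) (f (t 0)) = 0 := le_antisymm this zero_le
      exact (edist_eq_zero.mp h0).symm
  refine ⟨fun k => match k with | 0 => 0 | (k + 1) => t (k + 1), rfl, ?_, ?_, ?_, ?_⟩
  · intro k
    cases k with
    | zero => exact (ht01 1).1
    | succ k => exact htmono (k + 1)
  · intro k
    cases k with
    | zero => exact ⟨le_refl _, zero_le_one⟩
    | succ k => exact ht01 (k + 1)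
  · obtain ⟨m, rfl⟩ : ∃ m, N = m + 1 := ⟨N - 1, by omega⟩
    exact htN
  · intro k u hu
    cases k with
    | succ k => exact hS (k + 1) hu.1 hu.2
    | zero =>
      simp only at hu ⊢
      rcases le_or_gt (t 0) u with hc | hc
      · calc edist (f 0) (f u) = edist (f (t 0)) (f u) := by rw [hZ]
          _ ≤ ENNReal.ofReal δ := hS 0 hc hu.2
      · have hvu : v u ≤ ENNReal.ofReal ((0:ℕ) * δ) := hle 0 hc
        simp only [Nat.cast_zero, zero_mul, ENNReal.ofReal_zero] at hvu
        have : edist (f 0) (f u) ≤ v u :=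
          eVariationOn.edist_le f (left_mem_Icc.mpr hu.1) (right_mem_Icc.mpr hu.1)
        exact (this.trans hvu).trans zero_le
end Subdiv

section MoreHelpers
variable {X : Type*} [TopologicalSpace X]

theorem Path.coe_trans_congr {x y z x' y' z' : X} {p : Path x y} {q : Path y z}
    {p' : Path x' y'} {q' : Path y' z'} (hp : (p : I → X) = (p' : I → X))
    (hq : (q : I → X) = (q' : I → X)) :
    ((p.trans q : Path x z) : I → X) = ((p'.trans q' : Path x' z') : I → X) := by
  funext t
  rw [Path.trans_apply, Path.trans_apply]
  split_ifs with h
  · exact congrFun hp _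
  · exact congrFun hq _

theorem Path.coe_symm_congr {x y x' y' : X} {p : Path x y} {p' : Path x' y'}
    (hp : (p : I → X) = (p' : I → X)) :
    ((p.symm : Path y x) : I → X) = ((p'.symm : Path y' x') : I → X) := by
  funext t
  show p _ = p' _
  exact congrFun hp _

/-- Cancellation: `(A ∘ e⁻¹) ∘ (e ∘ B)` is homotopic to `A ∘ B`. -/
theorem Path.Homotopic.trans_symm_trans_cancel {w x y z : X} (A : Path w x) (e : Path y x)
    (B : Path x z) : ((A.trans e.symm).trans (e.trans B)).Homotopic (A.trans B) := by
  have h1 : ((A.trans e.symm).trans (e.trans B)).Homotopic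
      (A.trans (e.symm.trans (e.trans B))) := ⟨Path.Homotopy.transAssoc _ _ _⟩
  have h2 : (e.symm.trans (e.trans B)).Homotopic ((e.symm.trans e).trans B) :=
    ⟨(Path.Homotopy.transAssoc _ _ _).symm⟩
  have h3 : (e.symm.trans e).Homotopic (Path.refl x) :=
    ⟨(Path.Homotopy.reflSymmTrans e).symm⟩
  have h4 : ((e.symm.trans e).trans B).Homotopic ((Path.refl x).trans B) :=
    Path.Homotopic.hcomp h3 (Path.Homotopic.refl B)
  have h5 : ((Path.refl x).trans B).Homotopic B := ⟨Path.Homotopy.reflTrans B⟩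
  exact h1.trans (Path.Homotopic.hcomp (Path.Homotopic.refl A)
    ((h2.trans h4).trans h5))

/-- The chain path through the points `g 0, g 1, …`. -/
noncomputable def chainP {p : X} (hp : ∀ a : X, Path p a) (cp : ∀ a b : X, Path a b) (g : ℕ → X) :
    ∀ k : ℕ, Path p (g k)
  | 0 => hp (g 0)
  | (k + 1) => (chainP hp cp g k).trans (cp (g k) (g (k + 1)))

end MoreHelpers

section MetricHelpers
variable {X : Type*} [MetricSpace X]

theorem pathLength_cast {x y x' y' : X} (γ : Path x y) (hx : x' = x) (hy : y' = y) :
    pathLength (γ.cast hx hy) = pathLength γ := rfl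

theorem Path.dist_le_of_mem_range {x y : X} (γ : Path x y) {L : ℝ}
    (h : pathLength γ < ENNReal.ofReal L) {z : X} (hz : z ∈ range γ) : dist z x < L := by
  obtain ⟨t, rfl⟩ := hz
  have h1 : edist (γ.extend 0) (γ.extend t) ≤ pathLength γ :=
    eVariationOn.edist_le γ.extend (by simp : (0:ℝ) ∈ Icc (0:ℝ) 1) t.2
  rw [γ.extend_zero, γ.extend_extends'] at h1
  have := lt_of_le_of_lt h1 h
  rw [edist_comm] at this
  exact edist_lt_ofReal.mp this

end MetricHelpers

/-- **Lemma.** Let `(X, d)` be a connected length metric space (e.g. a connected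
Riemannian manifold) such that for some point `p` the distance function `d(·, p)` is
proper (closed balls about `p` are compact), and suppose that for each `R` there is an
`r > 0` such that every point `a` of the closed `R`-ball about `p` has the ball
`B(a; 3r)` contained in a simply connected open set.  Then for each `R > 0` the set
`K(p, R)` of homotopy classes of loops at `p` of length `< R` is finite. -/
theorem stmt10 {X : Type*} [MetricSpace X] [ConnectedSpace X] (p : X)
    (hproper : ∀ R : ℝ, IsCompact (Metric.closedBall p R))
    (hlength : ∀ x y : X, ∀ ε : ℝ, 0 < ε →
      ∃ γ : Path x y, pathLength γ < ENNReal.ofReal (dist x y + ε))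
    (hsc : ∀ R : ℝ, ∃ r : ℝ, 0 < r ∧ ∀ a ∈ Metric.closedBall p R,
      ∃ s : Set X, IsOpen s ∧ SimplyConnectedSpace s ∧ Metric.ball a (3 * r) ⊆ s) :
    ∀ R : ℝ, 0 < R →
      Set.Finite {c : Path.Homotopic.Quotient p p |
        ∃ γ : Path p p, pathLength γ < ENNReal.ofReal R ∧ (⟦γ⟧ : Path.Homotopic.Quotient p p) = c} := by
  intro R hR
  obtain ⟨r, hr, hsr⟩ := hsc R
  set δ : ℝ := r / 2 with hδdef
  have hδ : 0 < δ := by positivity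
  set ε : ℝ := r / 2 with hεdef
  have hε : 0 < ε := by positivity
  have hchoose : ∀ a b : X, ∃ q : Path a b, pathLength q < ENNReal.ofReal (dist a b + ε) :=
    fun a b => hlength a b ε hε
  set cpath : ∀ a b : X, Path a b := fun a b => (hchoose a b).choose with hcpath_def
  have hcpath : ∀ a b, pathLength (cpath a b) < ENNReal.ofReal (dist a b + ε) :=
    fun a b => (hchoose a b).choose_spec
  have hcrange : ∀ a b : X, ∀ z ∈ range (cpath a b), dist z a < dist a b + ε :=
    fun a b z hz => Path.dist_le_of_mem_range (cpath a b) (hcpath a b) hz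
  obtain ⟨T, hTsub, hTfin, hTcover⟩ := (hproper R).finite_cover_balls hδ
  set N : ℕ := ⌈R / δ⌉₊ + 1 with hNdef
  have hN1 : 1 ≤ N := by omega
  have hNδ : R ≤ (N : ℝ) * δ := by
    have h1 : R / δ ≤ (⌈R / δ⌉₊ : ℝ) := Nat.le_ceil _
    have h2 : ((⌈R / δ⌉₊ : ℕ) : ℝ) ≤ (N : ℝ) := by exact_mod_cast Nat.le_succ _
    have := (div_le_iff₀ hδ).mp (h1.trans h2)
    linarith
  set F : (ℕ → X) → Path.Homotopic.Quotient p p :=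
    fun g => ⟦(chainP (fun a => cpath p a) cpath g N).trans (cpath p (g N)).symm⟧ with hFdef
  set D : Set (ℕ → X) := {g | (∀ i, g i ∈ T) ∧ ∀ i, g (min i N) = g i} with hDdef
  have hDfin : D.Finite := by
    have himg : D ⊆ (fun (h : Fin (N + 1) → X) => (fun i => h ⟨min i N, by omega⟩ : ℕ → X)) ''
        (Set.univ.pi fun _ => T) := by
      intro g hg
      refine ⟨fun j => g j, fun j _ => hg.1 j, ?_⟩
      funext i
      exact hg.2 i
    exact (Set.Finite.image _ (Set.Finite.pi fun _ => hTfin)).subset himg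
  apply Set.Finite.subset (hDfin.image F)
  rintro c ⟨γ, hγlen, rfl⟩
  have hδle : pathLength γ ≤ ENNReal.ofReal ((N:ℝ) * δ) :=
    le_of_lt (lt_of_lt_of_le hγlen (ENNReal.ofReal_le_ofReal hNδ))
  obtain ⟨s, hs0, hsmono, hsIcc, hsN, hSbound⟩ := exists_subdivision γ hδ hN1 hδle
  have hsk1 : ∀ k, (0:ℝ) ≤ s k := fun k => (hsIcc k).1
  have hsle1 : ∀ k, s k ≤ 1 := fun k => (hsIcc k).2
  have hfball : ∀ u, u ∈ Icc (0:ℝ) 1 → γ.extend u ∈ Metric.closedBall p R := by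
    intro u hu
    have h1 : edist (γ.extend 0) (γ.extend u) ≤ pathLength γ :=
      eVariationOn.edist_le γ.extend (left_mem_Icc.mpr zero_le_one) hu
    have h2 := lt_of_le_of_lt h1 hγlen
    rw [γ.extend_zero, edist_comm] at h2
    exact Metric.mem_closedBall.mpr (edist_lt_ofReal.mp h2).le
  have hcov : ∀ k, ∃ w, w ∈ T ∧ dist (γ.extend (s k)) w < δ := by
    intro k
    have := hTcover (hfball (s k) (hsIcc k))
    simp only [mem_iUnion, Metric.mem_ball, exists_prop] at this
    exact this
  set b : ℕ → X := fun k => (hcov k).choose with hbdef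
  have hb : ∀ k, b k ∈ T ∧ dist (γ.extend (s k)) (b k) < δ := fun k => (hcov k).choose_spec
  set g : ℕ → X := fun i => b (min i N) with hgdef
  have hgD : g ∈ D := by
    constructor
    · intro i; exact (hb _).1
    · intro i
      show b (min (min i N) N) = b (min i N)
      rw [min_assoc, min_self]
  refine ⟨g, hgD, ?_⟩
  have hgT : ∀ k, g k ∈ T := fun k => (hb _).1
  have hgdist : ∀ k, k ≤ N → dist (γ.extend (s k)) (g k) < δ := by
    intro k hk
    show dist _ (b (min k N)) < δ
    rw [min_eq_left hk]
    exact (hb k).2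
  have e0 : p = γ.extend 0 := γ.extend_zero.symm
  set conn : ∀ k : ℕ, Path (γ.extend (s k)) (g k) := fun k =>
    if h : k = 0 then (cpath p (g k)).cast (by rw [h, hs0, γ.extend_zero]) rfl
    else if h' : k = N then (cpath p (g k)).cast (by rw [h', hsN, γ.extend_one]) rfl
    else cpath (γ.extend (s k)) (g k) with hconndef
  have hconnlen : ∀ k, pathLength (conn k) <
      ENNReal.ofReal (dist (γ.extend (s k)) (g k) + ε) := by
    intro k
    by_cases h : k = 0
    · have heq : γ.extend (s k) = p := by rw [h, hs0, γ.extend_zero]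
      simp only [hconndef, dif_pos h, pathLength_cast]
      rw [heq]
      exact hcpath p (g k)
    · by_cases h' : k = N
      · have heq : γ.extend (s k) = p := by rw [h', hsN, γ.extend_one]
        simp only [hconndef, dif_neg h, dif_pos h', pathLength_cast]
        rw [heq]
        exact hcpath p (g k)
      · simp only [hconndef, dif_neg h, dif_neg h']
        exact hcpath _ _
  have hconnrange : ∀ k, k ≤ N → ∀ z ∈ range (conn k), dist z (γ.extend (s k)) < δ + ε := by
    intro k hk z hz
    have h1 := Path.dist_le_of_mem_range (conn k) (hconnlen k) hz
    have h2 := hgdist k hk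
    linarith
  have hSdist : ∀ k, ∀ u ∈ Icc (s k) (s (k+1)),
      dist (γ.extend (s k)) (γ.extend u) ≤ δ := by
    intro k u hu
    exact (edist_le_ofReal hδ.le).mp (hSbound k u hu)
  have hgg : ∀ k, k + 1 ≤ N → dist (g k) (g (k+1)) < 3 * δ := by
    intro k hk
    have h1 := hgdist k (by omega)
    have h2 := hgdist (k+1) hk
    have h3 := hSdist k (s (k+1)) (right_mem_Icc.mpr (hsmono k))
    calc dist (g k) (g (k+1)) ≤ dist (g k) (γ.extend (s k)) +
          dist (γ.extend (s k)) (γ.extend (s (k+1))) + dist (γ.extend (s (k+1))) (g (k+1)) :=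
        dist_triangle4 _ _ _ _
      _ < 3 * δ := by rw [dist_comm (g k)]; linarith
  have hquad : ∀ k, k + 1 ≤ N →
      (γ.truncateOfLE (hsmono k)).Homotopic
        ((conn k).trans ((cpath (g k) (g (k+1))).trans (conn (k+1)).symm)) := by
    intro k hk
    obtain ⟨U, hUopen, hUsc, hUball⟩ := hsr (g k) (hTsub (hgT k))
    haveI := hUsc
    have hksub : dist (γ.extend (s k)) (g k) < δ := hgdist k (by omega)
    apply Path.Homotopic.of_range_subset (s := U)
    · intro z hz
      apply hUball
      obtain ⟨u, rfl⟩ := hz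
      have hval : (γ.truncateOfLE (hsmono k)) u =
          γ.extend (min (max ↑u (s k)) (s (k+1))) := rfl
      rw [Metric.mem_ball, hval]
      have hmem : min (max (↑u) (s k)) (s (k+1)) ∈ Icc (s k) (s (k+1)) :=
        ⟨le_min (le_max_right _ _) (hsmono k), min_le_right _ _⟩
      have h1 := hSdist k _ hmem
      have htr := dist_triangle (γ.extend (min (max (↑u) (s k)) (s (k+1)))) (γ.extend (s k)) (g k)
      have h1' : dist (γ.extend (min (max (↑u) (s k)) (s (k+1)))) (γ.extend (s k)) ≤ δ := by
        rw [dist_comm]; exact h1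
      linarith
    · intro z hz
      apply hUball
      rw [Path.trans_range, Path.trans_range, Path.symm_range] at hz
      rw [Metric.mem_ball]
      rcases hz with hz | hz | hz
      · have h1 := hconnrange k (by omega) z hz
        calc dist z (g k) ≤ dist z (γ.extend (s k)) + dist (γ.extend (s k)) (g k) :=
            dist_triangle _ _ _
          _ < 3 * r := by linarith
      · have h1 := hcrange (g k) (g (k+1)) z hz
        have h2 := hgg k hk
        linarith [dist_triangle z (g k) (g k)]
      · have h1 := hconnrange (k+1) hk z hz
        have h2 := hSdist k (s (k+1)) (right_mem_Icc.mpr (hsmono k))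
        have h3 := hgdist k (by omega)
        calc dist z (g k) ≤ dist z (γ.extend (s (k+1))) +
              dist (γ.extend (s (k+1))) (γ.extend (s k)) + dist (γ.extend (s k)) (g k) :=
            dist_triangle4 _ _ _ _
          _ < 3 * r := by rw [dist_comm (γ.extend (s (k+1)))]; linarith
  have main : ∀ k, k ≤ N →
      ((γ.truncateOfLE (hsk1 k)).cast e0 rfl).Homotopic
        ((chainP (fun a => cpath p a) cpath g k).trans (conn k).symm) := by
    intro k
    induction k with
    | zero =>
      intro _
      have h1 : (Path.refl p).Homotopic ((cpath p (g 0)).trans (cpath p (g 0)).symm) :=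
        ⟨Path.Homotopy.reflTransSymm _⟩
      apply Path.Homotopic.of_coe_eq ?_ ?_ h1
      · funext u
        show p = γ.extend (min (max (↑u) 0) (s 0))
        rw [hs0, max_eq_left u.2.1, min_eq_right u.2.1, γ.extend_zero]
      · apply Path.coe_trans_congr rfl
        apply Path.coe_symm_congr
        show (cpath p (g 0) : I → X) = (conn 0 : I → X)
        simp only [hconndef]
        rw [dif_pos trivial, Path.cast_coe]
    | succ k ih =>
      intro hk1
      have hk : k ≤ N := by omega
      have IH := ih hk
      have hT : ((γ.truncateOfLE (hsk1 (k+1))).cast e0 rfl).Homotopic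
          (((γ.truncateOfLE (hsk1 k)).cast e0 rfl).trans (γ.truncateOfLE (hsmono k))) := by
        have h := Path.Homotopic.trans_truncate γ (le_refl (0:ℝ)) (hsk1 k) (hsmono k)
          (hsle1 (k+1))
        apply Path.Homotopic.of_coe_eq ?_ ?_ h.symm
        · exact (Path.cast_coe _ _ _).symm
        · exact Path.coe_trans_congr (Path.cast_coe _ _ _).symm rfl
      have step2 : (((γ.truncateOfLE (hsk1 k)).cast e0 rfl).trans
            (γ.truncateOfLE (hsmono k))).Homotopic
          (((chainP (fun a => cpath p a) cpath g k).trans (conn k).symm).trans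
            ((conn k).trans ((cpath (g k) (g (k+1))).trans (conn (k+1)).symm))) :=
        Path.Homotopic.hcomp IH (hquad k hk1)
      have step3 := Path.Homotopic.trans_symm_trans_cancel
        (chainP (fun a => cpath p a) cpath g k) (conn k)
        ((cpath (g k) (g (k+1))).trans (conn (k+1)).symm)
      have step4 : ((chainP (fun a => cpath p a) cpath g k).trans
            ((cpath (g k) (g (k+1))).trans (conn (k+1)).symm)).Homotopic
          (((chainP (fun a => cpath p a) cpath g k).trans
            (cpath (g k) (g (k+1)))).trans (conn (k+1)).symm) :=
        ⟨(Path.Homotopy.transAssoc _ _ _).symm⟩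
      exact ((hT.trans step2).trans step3).trans step4
  have hmainN := main N (le_refl N)
  have hfinal : γ.Homotopic
      ((chainP (fun a => cpath p a) cpath g N).trans (cpath p (g N)).symm) := by
    apply Path.Homotopic.of_coe_eq ?_ ?_ hmainN
    · funext u
      show γ.extend (min (max (↑u) 0) (s N)) = γ u
      rw [hsN, max_eq_left u.2.1, min_eq_left u.2.2, γ.extend_extends']
    · apply Path.coe_trans_congr rfl
      apply Path.coe_symm_congr
      show (conn N : I → X) = (cpath p (g N) : I → X)
      have hN0 : N ≠ 0 := by omega
      simp only [hconndef, dif_neg hN0]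
      rw [dif_pos trivial, Path.cast_coe]
  exact (Quotient.sound hfinal).symm
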